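/- Let p = r₁(x)·s₂(y) − r₂(y)·s₁(x) be a near-separated polynomial in K[x₁,…,xₙ,y₁,…,yₙ], where r₁,s₁ depend on x₁,…,xₙ, r₂,s₂ depend on y₁,…,yₙ, neither pair being associated. Then the total degree of p with respect to the variables x₁,…,xₙ equals max(deg r₁, deg s₁), and the total degree of p with respect to y₁,…,yₙ equals max(deg r₂, deg s₂). -/

import Mathlib

open MvPolynomial

/-- Total degree of `p ∈ K[x₁,…,xₙ,y₁,…,yₙ]` with respect to the `x`-variables. -/
noncomputable def degX {K : Type*} [CommRing K] {n : ℕ}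
    (p : MvPolynomial (Fin n ⊕ Fin n) K) : ℕ :=
  ((sumAlgEquiv K (Fin n) (Fin n)) p).totalDegree

/-- Total degree of `p ∈ K[x₁,…,xₙ,y₁,…,yₙ]` with respect to the `y`-variables. -/
noncomputable def degY {K : Type*} [CommRing K] {n : ℕ}
    (p : MvPolynomial (Fin n ⊕ Fin n) K) : ℕ :=
  ((sumAlgEquiv K (Fin n) (Fin n)) (rename (Equiv.sumComm (Fin n) (Fin n)) p)).totalDegree

lemma sumAlgEquiv_rename_inl {K : Type*} [CommRing K] {n : ℕ}
    (f : MvPolynomial (Fin n) K) :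
    (sumAlgEquiv K (Fin n) (Fin n)) (rename Sum.inl f) = map C f := by
  induction f using MvPolynomial.induction_on with
  | C a => simp [sumAlgEquiv_C_inl]
  | add p q hp hq => simp only [map_add, hp, hq]
  | mul_X p i hp => simp only [map_mul, rename_X, hp]; simp [sumAlgEquiv_X_inl]

lemma sumAlgEquiv_rename_inr {K : Type*} [CommRing K] {n : ℕ}
    (f : MvPolynomial (Fin n) K) :
    (sumAlgEquiv K (Fin n) (Fin n)) (rename Sum.inr f) = C f := by
  induction f using MvPolynomial.induction_on with
  | C a => simp [sumAlgEquiv_C_inl]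
  | add p q hp hq => simp only [map_add, hp, hq]
  | mul_X p i hp => simp only [map_mul, rename_X, hp]; simp [sumAlgEquiv_X_inr]

lemma totalDegree_map_C_eq {K : Type*} [Field K] {n : ℕ}
    (f : MvPolynomial (Fin n) K) :
    (map (C : K →+* MvPolynomial (Fin n) K) f).totalDegree = f.totalDegree := by
  unfold totalDegree
  rw [support_map_of_injective _ (C_injective _ _)]

lemma aux_le {K : Type*} [Field K] {n : ℕ}
    (A B D E : MvPolynomial (Fin n) K)
    (hA : A ≠ 0) (hB : B ≠ 0)
    (hna : ¬ Associated D B) :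
    A.totalDegree ≤
      (map (C : K →+* MvPolynomial (Fin n) K) A * C B - C D * map C E).totalDegree := by
  set q := map (C : K →+* MvPolynomial (Fin n) K) A * C B - C D * map C E with hq
  obtain ⟨m, hm, hmdeg⟩ := A.support.exists_mem_eq_sup
    (MvPolynomial.support_nonempty.mpr hA) fun m => m.sum fun _ e => e
  have ha : coeff m A ≠ 0 := mem_support_iff.mp hm
  have hCa : (C (coeff m A) : MvPolynomial (Fin n) K) ≠ 0 := by
    simpa using ha
  have key : coeff m q = C (coeff m A) * B - D * C (coeff m E) := by
    rw [hq, coeff_sub, mul_comm (map (C : K →+* MvPolynomial (Fin n) K) A) (C B),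
      coeff_C_mul, coeff_C_mul, coeff_map, coeff_map]
    ring
  have hc : coeff m q ≠ 0 := by
    rw [key]
    intro h0
    have heqq : C (coeff m A) * B = D * C (coeff m E) := sub_eq_zero.mp h0
    by_cases he : coeff m E = 0
    · rw [he, map_zero, mul_zero] at heqq
      exact mul_ne_zero hCa hB heqq
    · apply hna
      have hu : IsUnit (C ((coeff m A)⁻¹ * coeff m E) : MvPolynomial (Fin n) K) :=
        (isUnit_iff_ne_zero.mpr (mul_ne_zero (inv_ne_zero ha) he)).map
          (C : K →+* MvPolynomial (Fin n) K)
      refine ⟨hu.unit, ?_⟩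
      rw [IsUnit.unit_spec]
      apply mul_left_cancel₀ hCa
      calc C (coeff m A) * (D * C ((coeff m A)⁻¹ * coeff m E))
          = D * (C (coeff m A) * C ((coeff m A)⁻¹ * coeff m E)) := by ring
        _ = D * C (coeff m A * ((coeff m A)⁻¹ * coeff m E)) := by rw [← C_mul]
        _ = D * C (coeff m E) := by rw [mul_inv_cancel_left₀ ha]
        _ = C (coeff m A) * B := heqq.symm
  have hle := le_totalDegree (p := q) (mem_support_iff.mpr hc)
  have hdeg : A.totalDegree = m.sum fun _ e => e := by rw [totalDegree]; exact hmdeg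
  exact hdeg ▸ hle

lemma aux_deg {K : Type*} [Field K] {n : ℕ}
    (A B D E : MvPolynomial (Fin n) K)
    (hA : A ≠ 0) (hB : B ≠ 0) (hD : D ≠ 0) (hE : E ≠ 0)
    (hna : ¬ Associated D B) :
    (map (C : K →+* MvPolynomial (Fin n) K) A * C B - C D * map C E).totalDegree
      = max A.totalDegree E.totalDegree := by
  refine le_antisymm ?_ ?_
  · refine (totalDegree_sub _ _).trans (max_le_max ?_ ?_)
    · calc (map (C : K →+* MvPolynomial (Fin n) K) A * C B).totalDegree
          ≤ (map (C : K →+* MvPolynomial (Fin n) K) A).totalDegree + (C B).totalDegree :=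
            totalDegree_mul _ _
        _ ≤ A.totalDegree := by rw [totalDegree_C, totalDegree_map_C_eq]; simp
    · calc (C D * map (C : K →+* MvPolynomial (Fin n) K) E).totalDegree
          ≤ (C D).totalDegree + (map (C : K →+* MvPolynomial (Fin n) K) E).totalDegree :=
            totalDegree_mul _ _
        _ ≤ E.totalDegree := by rw [totalDegree_C, totalDegree_map_C_eq]; simp
  · rcases le_total E.totalDegree A.totalDegree with h | h
    · rw [max_eq_left h]
      exact aux_le A B D E hA hB hna
    · rw [max_eq_right h]
      have hrw : map (C : K →+* MvPolynomial (Fin n) K) A * C B - C D * map C E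
          = -(map (C : K →+* MvPolynomial (Fin n) K) E * C D - C B * map C A) := by ring
      rw [hrw, totalDegree_neg]
      exact aux_le E D B A hE hD (fun h' => hna h'.symm)

theorem near_separated_degrees
    {K : Type*} [Field K] {n : ℕ}
    (r₁ s₁ r₂ s₂ : MvPolynomial (Fin n) K)
    (hr₁ : 0 < r₁.totalDegree) (hs₁ : 0 < s₁.totalDegree)
    (hr₂ : 0 < r₂.totalDegree) (hs₂ : 0 < s₂.totalDegree)
    (hna₁ : ¬ Associated r₁ s₁) (hna₂ : ¬ Associated r₂ s₂)
    (p : MvPolynomial (Fin n ⊕ Fin n) K)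
    (hp : p = rename Sum.inl r₁ * rename Sum.inr s₂ - rename Sum.inr r₂ * rename Sum.inl s₁) :
    degX p = max r₁.totalDegree s₁.totalDegree ∧
    degY p = max r₂.totalDegree s₂.totalDegree := by
  have hr₁0 : r₁ ≠ 0 := fun h => by simp [h] at hr₁
  have hs₁0 : s₁ ≠ 0 := fun h => by simp [h] at hs₁
  have hr₂0 : r₂ ≠ 0 := fun h => by simp [h] at hr₂
  have hs₂0 : s₂ ≠ 0 := fun h => by simp [h] at hs₂
  constructor
  · rw [degX, hp, map_sub, map_mul, map_mul, sumAlgEquiv_rename_inl, sumAlgEquiv_rename_inl,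
      sumAlgEquiv_rename_inr, sumAlgEquiv_rename_inr]
    exact aux_deg r₁ s₂ r₂ s₁ hr₁0 hs₂0 hr₂0 hs₁0 hna₂
  · have hrw : rename (Equiv.sumComm (Fin n) (Fin n)) p
        = rename Sum.inr r₁ * rename Sum.inl s₂ - rename Sum.inl r₂ * rename Sum.inr s₁ := by
      rw [hp, map_sub, map_mul, map_mul, rename_rename, rename_rename, rename_rename,
        rename_rename]
      rfl
    rw [degY, hrw, map_sub, map_mul, map_mul, sumAlgEquiv_rename_inl, sumAlgEquiv_rename_inl,
      sumAlgEquiv_rename_inr, sumAlgEquiv_rename_inr]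
    have hrw2 : (C r₁ : MvPolynomial (Fin n) (MvPolynomial (Fin n) K)) * map C s₂
        - map C r₂ * C s₁
        = map (C : K →+* MvPolynomial (Fin n) K) s₂ * C r₁ - C s₁ * map C r₂ := by ring
    rw [hrw2, aux_deg s₂ r₁ s₁ r₂ hs₂0 hr₁0 hs₁0 hr₂0 (fun h => hna₁ h.symm), max_comm]
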